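/- arXiv:2311.06638 — 10 statements merged into one kernel-verified Lean document; each statement's English description precedes it below -/
import Mathlib

section
/- Let G be a homogeneous group with homogeneous norm ‖·‖ and let (W,V) be a couple of complementary homogeneous subgroups. Then the quantity c₀ = inf{ ‖wv‖ : w ∈ W, v ∈ V, ‖w‖ + ‖v‖ = 1 } is strictly positive. -/
/-- A homogeneous group: a group with dilations and a left-invariant,
dilation-homogeneous distance. -/
class HomogeneousGroup (G : Type*) extends Group G, MetricSpace G where
  dil : ℝ → G → G
  dil_id : ∀ x : G, dil 1 x = x
  dil_comp : ∀ {s t : ℝ}, 0 < s → 0 < t → ∀ x : G, dil s (dil t x) = dil (s * t) x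
  dil_mul : ∀ {t : ℝ}, 0 < t → ∀ x y : G, dil t (x * y) = dil t x * dil t y
  continuous_mul' : Continuous fun p : G × G => p.1 * p.2
  continuous_inv' : Continuous fun x : G => x⁻¹
  dist_left_invariant : ∀ z x y : G, dist (z * x) (z * y) = dist x y
  dist_dil : ∀ {t : ℝ}, 0 < t → ∀ x y : G, dist (dil t x) (dil t y) = t * dist x y

namespace HomogeneousGroup

variable {G : Type*} [HomogeneousGroup G]

/-- The homogeneous norm associated with the homogeneous distance. -/
def hnorm (x : G) : ℝ := dist x 1

/-- A homogeneous subgroup: a closed subgroup invariant under dilations. -/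
def IsHomSubgroup (W : Subgroup G) : Prop :=
  IsClosed (W : Set G) ∧ ∀ t : ℝ, 0 < t → ∀ x ∈ W, dil t x ∈ W

/-- `(W,V)` is a couple of complementary homogeneous subgroups:
`W ∩ V = {1}` and `G = W · V`. -/
def AreComplementary (W V : Subgroup G) : Prop :=
  IsHomSubgroup W ∧ IsHomSubgroup V ∧ W ⊓ V = ⊥ ∧
    ∀ x : G, ∃ w ∈ W, ∃ v ∈ V, x = w * v

/-- `πW, πV` are the group projections associated with the factorization
`x = πW x * πV x`, `πW x ∈ W`, `πV x ∈ V`. -/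
def AreProjections (W V : Subgroup G) (πW πV : G → G) : Prop :=
  ∀ x : G, πW x ∈ W ∧ πV x ∈ V ∧ x = πW x * πV x

end HomogeneousGroup

open HomogeneousGroup

/-- For a couple `(W,V)` of complementary homogeneous subgroups of a
homogeneous group `G`, the quantity
`c₀ = inf { ‖w v‖ : w ∈ W, v ∈ V, ‖w‖ + ‖v‖ = 1 }` is strictly positive. -/
theorem statement0 {G : Type*} [HomogeneousGroup G] [Nontrivial G] [ProperSpace G]
    (W V : Subgroup G) (h : AreComplementary W V) :
    0 < sInf {r : ℝ | ∃ w ∈ W, ∃ v ∈ V, hnorm w + hnorm v = 1 ∧ r = hnorm (w * v)} := by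
  classical
  obtain ⟨hW, hV, hWV, hfact⟩ := h
  -- dilation fixes 1
  have hdil_one : ∀ {t : ℝ}, 0 < t → dil t (1 : G) = 1 := by
    intro t ht
    have h1 := dil_mul ht (1 : G) 1
    rw [mul_one] at h1
    exact (left_eq_mul.mp h1)
  -- hnorm of a dilation
  have hnorm_dil : ∀ {t : ℝ}, 0 < t → ∀ x : G, hnorm (dil t x) = t * hnorm x := by
    intro t ht x
    have : hnorm (dil t x) = dist (dil t x) (dil t 1) := by
      rw [hdil_one ht]; rfl
    rw [this, dist_dil ht]; rfl
  have hnorm_nonneg : ∀ x : G, 0 ≤ hnorm x := fun x => dist_nonneg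
  have hnorm_eq_zero : ∀ x : G, hnorm x = 0 ↔ x = 1 := fun x => dist_eq_zero
  have hnorm_cont : Continuous (hnorm : G → ℝ) :=
    Continuous.dist continuous_id continuous_const
  -- the compact set of pairs
  set K : Set (G × G) :=
    {p | p.1 ∈ W ∧ p.2 ∈ V ∧ hnorm p.1 + hnorm p.2 = 1} with hK
  have hKclosed : IsClosed K := by
    have h1 : IsClosed {p : G × G | p.1 ∈ W} := hW.1.preimage continuous_fst
    have h2 : IsClosed {p : G × G | p.2 ∈ V} := hV.1.preimage continuous_snd
    have h3 : IsClosed {p : G × G | hnorm p.1 + hnorm p.2 = 1} :=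
      isClosed_eq (((hnorm_cont.comp continuous_fst).add
        (hnorm_cont.comp continuous_snd))) continuous_const
    exact h1.inter (h2.inter h3)
  have hKsub : K ⊆ Metric.closedBall (1 : G) 1 ×ˢ Metric.closedBall (1 : G) 1 := by
    rintro ⟨w, v⟩ ⟨_, _, hsum⟩
    constructor
    · exact Metric.mem_closedBall.mpr (show hnorm w ≤ 1 by linarith [hnorm_nonneg v])
    · exact Metric.mem_closedBall.mpr (show hnorm v ≤ 1 by linarith [hnorm_nonneg w])
  have hKcompact : IsCompact K :=
    ((isCompact_closedBall (1 : G) 1).prod (isCompact_closedBall (1 : G) 1)).of_isClosed_subset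
      hKclosed hKsub
  -- K is nonempty
  obtain ⟨g, hg⟩ := exists_ne (1 : G)
  obtain ⟨w, hw, v, hv, hgwv⟩ := hfact g
  have hc : 0 < hnorm w + hnorm v := by
    rcases lt_or_eq_of_le (add_nonneg (hnorm_nonneg w) (hnorm_nonneg v)) with h' | h'
    · exact h'
    · exfalso
      have hw0 : hnorm w = 0 := le_antisymm (by linarith [hnorm_nonneg v]) (hnorm_nonneg w)
      have hv0 : hnorm v = 0 := le_antisymm (by linarith [hnorm_nonneg w]) (hnorm_nonneg v)
      apply hg
      rw [hgwv, (hnorm_eq_zero w).mp hw0, (hnorm_eq_zero v).mp hv0, mul_one]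
  have hcinv : 0 < (hnorm w + hnorm v)⁻¹ := inv_pos.mpr hc
  have hKne : K.Nonempty := by
    refine ⟨(dil (hnorm w + hnorm v)⁻¹ w, dil (hnorm w + hnorm v)⁻¹ v),
      hW.2 _ hcinv w hw, hV.2 _ hcinv v hv, ?_⟩
    rw [hnorm_dil hcinv, hnorm_dil hcinv, ← mul_add, inv_mul_cancel₀ (ne_of_gt hc)]
  -- the set S is the image of K
  have hSim : {r : ℝ | ∃ w ∈ W, ∃ v ∈ V, hnorm w + hnorm v = 1 ∧ r = hnorm (w * v)} =
      (fun p : G × G => hnorm (p.1 * p.2)) '' K := by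
    ext r
    constructor
    · rintro ⟨w, hw, v, hv, hsum, hr⟩
      exact ⟨(w, v), ⟨hw, hv, hsum⟩, hr.symm⟩
    · rintro ⟨⟨w, v⟩, ⟨hw, hv, hsum⟩, hr⟩
      exact ⟨w, hw, v, hv, hsum, hr.symm⟩
  have hfcont : Continuous fun p : G × G => hnorm (p.1 * p.2) :=
    hnorm_cont.comp continuous_mul'
  rw [hSim]
  have himgcompact : IsCompact ((fun p : G × G => hnorm (p.1 * p.2)) '' K) :=
    hKcompact.image hfcont
  have himgne : ((fun p : G × G => hnorm (p.1 * p.2)) '' K).Nonempty := hKne.image _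
  obtain ⟨⟨w', v'⟩, ⟨hw', hv', hsum'⟩, heq⟩ :=
    (hSim ▸ hSim.symm ▸ himgcompact.sInf_mem himgne : sInf _ ∈ _)
  rw [← heq]
  rcases lt_or_eq_of_le (hnorm_nonneg (w' * v')) with h' | h'
  · exact h'
  · exfalso
    have h1 : w' * v' = 1 := (hnorm_eq_zero _).mp h'.symm
    have hwv : w' = v'⁻¹ := eq_inv_of_mul_eq_one_left h1
    have hmem : w' ∈ W ⊓ V := ⟨hw', hwv ▸ (V.inv_mem hv')⟩
    rw [hWV, Subgroup.mem_bot] at hmem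
    have hv1 : v' = 1 := by rw [hmem] at hwv; exact (inv_eq_one.mp hwv.symm)
    rw [hmem, hv1] at hsum'
    simp [hnorm] at hsum'
end

section
/- Let (W,V) be complementary homogeneous subgroups of a homogeneous group G with constant c₀ as above, and let π_V : G → V denote the group projection given by the unique factorization x = π_W(x)·π_V(x). Then for every x ∈ G one has c₀ ‖π_V(x)‖ ≤ dist(x, W) ≤ ‖π_V(x)‖, where dist(x,W) = inf{ d(x,y) : y ∈ W }. -/
open HomogeneousGroup

namespace HomogeneousGroup

variable {G : Type*} [HomogeneousGroup G]

theorem hnorm_nonneg (x : G) : 0 ≤ hnorm x := dist_nonneg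

theorem dil_one {t : ℝ} (ht : 0 < t) : dil t (1 : G) = 1 := by
  have := dil_mul ht (1 : G) 1
  rw [mul_one] at this
  exact mul_right_cancel (a := dil t (1:G)) (by rw [one_mul, ← this])

theorem hnorm_dil {t : ℝ} (ht : 0 < t) (x : G) : hnorm (dil t x) = t * hnorm x := by
  unfold hnorm
  conv_lhs => rw [← dil_one (G := G) ht]
  rw [dist_dil ht]

end HomogeneousGroup

open HomogeneousGroup

/-- With `(W,V)` complementary homogeneous subgroups, `c₀` as above and
`π_V` the group projection on `V`, for every `x ∈ G` one has
`c₀ ‖π_V x‖ ≤ dist(x, W) ≤ ‖π_V x‖`. -/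
theorem statement2 {G : Type*} [HomogeneousGroup G]
    (W V : Subgroup G) (h : AreComplementary W V)
    (πW πV : G → G) (hproj : AreProjections W V πW πV) (c₀ : ℝ)
    (hc₀ : c₀ = sInf {r : ℝ | ∃ w ∈ W, ∃ v ∈ V, hnorm w + hnorm v = 1 ∧ r = hnorm (w * v)}) :
    ∀ x : G,
      c₀ * hnorm (πV x) ≤ Metric.infDist x (W : Set G) ∧
      Metric.infDist x (W : Set G) ≤ hnorm (πV x) := by
  obtain ⟨⟨hWc, hWd⟩, ⟨hVc, hVd⟩, -, -⟩ := h
  have hc₀nn : 0 ≤ c₀ := by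
    rw [hc₀]
    apply Real.sInf_nonneg
    rintro r ⟨w, -, v, -, -, rfl⟩
    exact hnorm_nonneg _
  -- key inequality
  have key : ∀ w ∈ W, ∀ v ∈ V, c₀ * (hnorm w + hnorm v) ≤ hnorm (w * v) := by
    intro w hw v hv
    rcases eq_or_lt_of_le (add_nonneg (hnorm_nonneg w) (hnorm_nonneg v)) with hs | hs
    · rw [← hs, mul_zero]; exact hnorm_nonneg _
    · set s := hnorm w + hnorm v with hsdef
      have hts : 0 < s⁻¹ := inv_pos.mpr hs
      have hmem : hnorm (dil s⁻¹ w * dil s⁻¹ v) ∈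
          {r : ℝ | ∃ w ∈ W, ∃ v ∈ V, hnorm w + hnorm v = 1 ∧ r = hnorm (w * v)} := by
        refine ⟨dil s⁻¹ w, hWd _ hts w hw, dil s⁻¹ v, hVd _ hts v hv, ?_, rfl⟩
        rw [hnorm_dil hts, hnorm_dil hts, ← mul_add, inv_mul_cancel₀ hs.ne']
      have hbdd : BddBelow {r : ℝ | ∃ w ∈ W, ∃ v ∈ V, hnorm w + hnorm v = 1 ∧ r = hnorm (w * v)} :=
        ⟨0, by rintro r ⟨w, -, v, -, -, rfl⟩; exact hnorm_nonneg _⟩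
      have hle : c₀ ≤ hnorm (dil s⁻¹ w * dil s⁻¹ v) := hc₀ ▸ csInf_le hbdd hmem
      rw [← dil_mul hts, hnorm_dil hts] at hle
      calc c₀ * s ≤ (s⁻¹ * hnorm (w * v)) * s := by
            exact mul_le_mul_of_nonneg_right hle hs.le
        _ = hnorm (w * v) := by field_simp
  intro x
  obtain ⟨hπW, hπV, hx⟩ := hproj x
  have hWne : (W : Set G).Nonempty := ⟨1, W.one_mem⟩
  constructor
  · refine le_of_not_gt fun hlt => ?_
    obtain ⟨y, hy, hdlt⟩ := (Metric.infDist_lt_iff hWne).mp hlt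
    refine absurd hdlt (not_lt.mpr ?_)
    have hdist : dist x y = hnorm (y⁻¹ * πW x * πV x) := by
      unfold hnorm
      conv_lhs => rw [← dist_left_invariant y⁻¹ x y, hx]
      rw [inv_mul_cancel, ← mul_assoc]
    rw [hdist]
    calc c₀ * hnorm (πV x) ≤ c₀ * (hnorm (y⁻¹ * πW x) + hnorm (πV x)) := by
          apply mul_le_mul_of_nonneg_left _ hc₀nn
          linarith [hnorm_nonneg (y⁻¹ * πW x)]
      _ ≤ hnorm (y⁻¹ * πW x * πV x) := key _ (W.mul_mem (W.inv_mem hy) hπW) _ hπV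
  · have : dist x (πW x) = hnorm (πV x) := by
      unfold hnorm
      calc dist x (πW x) = dist (πW x * πV x) (πW x * 1) := by rw [← hx, mul_one]
        _ = dist (πV x) 1 := dist_left_invariant _ _ _
    rw [← this]
    exact Metric.infDist_le_dist_of_mem hπW
end

section
/- Let (W,V) be complementary homogeneous subgroups of a homogeneous group G, A ⊂ W, φ : A → V with graph map Φ(w) = w·φ(w), and let x ∈ G. Define A_x = σ_x(A) and the translated function φ_x : A_x → V by φ_x(η) = (π_V(x⁻¹η))⁻¹ · φ(π_W(x⁻¹η)). Then x · graph(φ) = graph(φ_x), i.e. x·{wφ(w) : w ∈ A} = {η·φ_x(η) : η ∈ A_x}. -/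
open HomogeneousGroup

/-- Translation of intrinsic graphs: for `φ : A → V`, `A ⊆ W`, and
`x ∈ G`, one has `x · graph(φ) = graph(φ_x)`, where `A_x = σ_x(A)` and
`φ_x(η) = (π_V(x⁻¹η))⁻¹ · φ(π_W(x⁻¹η))`. -/
theorem statement4 {G : Type*} [HomogeneousGroup G]
    (W V : Subgroup G) (h : AreComplementary W V)
    (πW πV : G → G) (hproj : AreProjections W V πW πV)
    (A : Set G) (hA : A ⊆ (W : Set G))
    (φ : G → G) (hφ : ∀ w ∈ A, φ w ∈ V) (x : G) :
    (fun g => x * g) '' {g : G | ∃ w ∈ A, g = w * φ w} =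
      {g : G | ∃ η ∈ (fun η => πW (x * η)) '' A,
        g = η * ((πV (x⁻¹ * η))⁻¹ * φ (πW (x⁻¹ * η)))} := by

  have key : ∀ g w v : G, w ∈ W → v ∈ V → g = w * v → πW g = w ∧ πV g = v := by
    intro g w v hw hv hg
    obtain ⟨hw', hv', hg'⟩ := hproj g
    obtain ⟨_, _, hbot, _⟩ := h
    have h1 : w⁻¹ * πW g = v * (πV g)⁻¹ := by
      have hwv : w * v = πW g * πV g := by rw [← hg, ← hg']
      have h2 : πW g = w * v * (πV g)⁻¹ := by rw [hwv]; group
      rw [h2]; group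
    have hmem : w⁻¹ * πW g ∈ W ⊓ V := by
      constructor
      · exact W.mul_mem (W.inv_mem hw) hw'
      · rw [h1]; exact V.mul_mem hv (V.inv_mem hv')
    rw [hbot] at hmem
    have hW : w⁻¹ * πW g = 1 := hmem
    have hpw : πW g = w := by
      calc πW g = w * (w⁻¹ * πW g) := by group
        _ = w := by rw [hW]; group
    constructor
    · exact hpw
    · have : w * v = πW g * πV g := by rw [← hg, ← hg']
      rw [hpw] at this
      exact (mul_left_cancel this).symm
  have fact : ∀ w ∈ A, πW (x⁻¹ * πW (x * w)) = w ∧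
      πV (x⁻¹ * πW (x * w)) = (πV (x * w))⁻¹ := by
    intro w hwA
    obtain ⟨hw', hv', hg'⟩ := hproj (x * w)
    apply key
    · exact hA hwA
    · exact V.inv_mem hv'
    · have h2 : πW (x * w) = x * w * (πV (x * w))⁻¹ := eq_mul_inv_of_mul_eq hg'.symm
      rw [h2]; group
  ext g
  simp only [Set.mem_image, Set.mem_setOf_eq]
  constructor
  · rintro ⟨_, ⟨w, hwA, rfl⟩, rfl⟩
    refine ⟨πW (x * w), ⟨w, hwA, rfl⟩, ?_⟩
    obtain ⟨hW, hV⟩ := fact w hwA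
    rw [hW, hV]
    obtain ⟨_, _, hg'⟩ := hproj (x * w)
    rw [inv_inv, ← mul_assoc, ← mul_assoc, ← hg']
  · rintro ⟨_, ⟨w, hwA, rfl⟩, rfl⟩
    refine ⟨w * φ w, ⟨w, hwA, rfl⟩, ?_⟩
    obtain ⟨hW, hV⟩ := fact w hwA
    rw [hW, hV]
    obtain ⟨_, _, hg'⟩ := hproj (x * w)
    rw [inv_inv, ← mul_assoc, ← mul_assoc, ← hg']
end

section
/- Let (W,V) be complementary homogeneous subgroups of a homogeneous group G, with W a normal subgroup. Then φ : A → V (A ⊂ W) is intrinsic L-Lipschitz if and only if ‖φ(w')⁻¹ φ(w)‖ ≤ L ‖φ(w')⁻¹ w'⁻¹ w φ(w')‖ for every w, w' ∈ A. -/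
open HomogeneousGroup

/-- Uniqueness of the `W · V` factorization. -/
lemma proj_unique {G : Type*} [HomogeneousGroup G]
    (W V : Subgroup G) (hbot : W ⊓ V = ⊥)
    (πW πV : G → G) (hproj : AreProjections W V πW πV)
    (x a b : G) (ha : a ∈ W) (hb : b ∈ V) (hx : x = a * b) :
    πW x = a ∧ πV x = b := by
  obtain ⟨hW, hV, hdec⟩ := hproj x
  have h2 : a * b = πW x * πV x := by rw [← hx]; exact hdec
  have heq : a⁻¹ * πW x = b * (πV x)⁻¹ :=
    calc a⁻¹ * πW x = a⁻¹ * (πW x * πV x) * (πV x)⁻¹ := by group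
      _ = a⁻¹ * (a * b) * (πV x)⁻¹ := by rw [← h2]
      _ = b * (πV x)⁻¹ := by group
  have key : a⁻¹ * πW x = 1 := by
    have hmemW : a⁻¹ * πW x ∈ W := W.mul_mem (W.inv_mem ha) hW
    have hmemV : a⁻¹ * πW x ∈ V := heq ▸ V.mul_mem hb (V.inv_mem hV)
    have : a⁻¹ * πW x ∈ W ⊓ V := ⟨hmemW, hmemV⟩
    simpa [hbot] using this
  have h1 : πW x = a := by
    have := congrArg (a * ·) key
    simpa [mul_assoc] using this
  refine ⟨h1, ?_⟩
  have h3 : a * b = a * πV x :=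
    calc a * b = x := hx.symm
      _ = πW x * πV x := hdec
      _ = a * πV x := by rw [h1]
  exact (mul_left_cancel h3).symm

/-- If `W` is normal, then `φ : A → V` is intrinsic `L`-Lipschitz
(i.e. `‖π_V(Φ(w')⁻¹Φ(w))‖ ≤ L ‖π_W(Φ(w')⁻¹Φ(w))‖` for all `w, w' ∈ A`, where
`Φ(w) = w φ(w)`) if and only if
`‖φ(w')⁻¹ φ(w)‖ ≤ L ‖φ(w')⁻¹ w'⁻¹ w φ(w')‖` for every `w, w' ∈ A`. -/

theorem statement5 {G : Type*} [HomogeneousGroup G]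
    (W V : Subgroup G) (h : AreComplementary W V) (hWn : W.Normal)
    (πW πV : G → G) (hproj : AreProjections W V πW πV)
    (A : Set G) (hA : A ⊆ (W : Set G))
    (φ : G → G) (hφ : ∀ w ∈ A, φ w ∈ V) (L : ℝ) (hL : 0 ≤ L) :
    (∀ w ∈ A, ∀ w' ∈ A,
        hnorm (πV ((w' * φ w')⁻¹ * (w * φ w))) ≤ L * hnorm (πW ((w' * φ w')⁻¹ * (w * φ w))))
      ↔
    (∀ w ∈ A, ∀ w' ∈ A,
        hnorm ((φ w')⁻¹ * φ w) ≤ L * hnorm ((φ w')⁻¹ * w'⁻¹ * w * φ w')) := by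
  obtain ⟨hWhom, hVhom, hbot, hfact⟩ := h
  have key : ∀ w ∈ A, ∀ w' ∈ A,
      πW ((w' * φ w')⁻¹ * (w * φ w)) = (φ w')⁻¹ * w'⁻¹ * w * φ w' ∧
      πV ((w' * φ w')⁻¹ * (w * φ w)) = (φ w')⁻¹ * φ w := by
    intro w hw w' hw'
    have ha : (φ w')⁻¹ * w'⁻¹ * w * φ w' ∈ W := by
      have := hWn.conj_mem (w'⁻¹ * w) (W.mul_mem (W.inv_mem (hA hw')) (hA hw)) (φ w')⁻¹
      simpa [mul_assoc] using this
    have hb : (φ w')⁻¹ * φ w ∈ V := V.mul_mem (V.inv_mem (hφ w' hw')) (hφ w hw)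
    exact proj_unique W V hbot πW πV hproj _ _ _ ha hb (by group)
  constructor
  · intro H w hw w' hw'
    have := H w hw w' hw'
    rw [(key w hw w' hw').1, (key w hw w' hw').2] at this
    exact this
  · intro H w hw w' hw'
    rw [(key w hw w' hw').1, (key w hw w' hw').2]
    exact H w hw w' hw'
end

section
/- Let (W,V) be complementary homogeneous subgroups of a homogeneous group G, A ⊂ W, and φ : A → V with graph map Φ. Then φ is intrinsic L-Lipschitz if and only if for every x ∈ graph(φ) and every w ∈ A_{x⁻¹} one has ‖φ_{x⁻¹}(w)‖ ≤ L‖w‖, where φ_{x⁻¹} denotes the translated function of φ by x⁻¹. -/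
open HomogeneousGroup

/-- `φ : A → V` is intrinsic `L`-Lipschitz if and only if for every
`x ∈ graph(φ)` and every `w ∈ A_{x⁻¹}` one has `‖φ_{x⁻¹}(w)‖ ≤ L ‖w‖`, where
`A_{x⁻¹} = σ_{x⁻¹}(A)` and `φ_{x⁻¹}(w) = (π_V(xw))⁻¹ φ(π_W(xw))`. -/
theorem statement6 {G : Type*} [HomogeneousGroup G]
    (W V : Subgroup G) (h : AreComplementary W V)
    (πW πV : G → G) (hproj : AreProjections W V πW πV)
    (A : Set G) (hA : A ⊆ (W : Set G))
    (φ : G → G) (hφ : ∀ w ∈ A, φ w ∈ V) (L : ℝ) (hL : 0 ≤ L) :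
    (∀ w ∈ A, ∀ w' ∈ A,
        hnorm (πV ((w' * φ w')⁻¹ * (w * φ w))) ≤ L * hnorm (πW ((w' * φ w')⁻¹ * (w * φ w))))
      ↔
    (∀ x ∈ {g : G | ∃ w ∈ A, g = w * φ w},
      ∀ w ∈ (fun η => πW (x⁻¹ * η)) '' A,
        hnorm ((πV (x * w))⁻¹ * φ (πW (x * w))) ≤ L * hnorm w) := by
  obtain ⟨hW, hV, hWV, -⟩ := h
  -- uniqueness of the decomposition
  have uniq : ∀ g w v : G, w ∈ W → v ∈ V → g = w * v → πW g = w ∧ πV g = v := by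
    intro g w v hw hv hg
    obtain ⟨hw1, hv1, hg1⟩ := hproj g
    have e : πW g * πV g = w * v := hg1.symm.trans hg
    have e2 : w⁻¹ * πW g = v * (πV g)⁻¹ := by
      have := congrArg (fun z => w⁻¹ * z * (πV g)⁻¹) e
      simpa [mul_assoc] using this
    have mem : w⁻¹ * πW g ∈ W ⊓ V := by
      refine Subgroup.mem_inf.mpr ⟨W.mul_mem (W.inv_mem hw) hw1, ?_⟩
      rw [e2]; exact V.mul_mem hv (V.inv_mem hv1)
    rw [hWV, Subgroup.mem_bot] at mem
    have h1 : πW g = w := by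
      have := mem
      rwa [inv_mul_eq_one, eq_comm] at this
    have h2 : πV g = v := by
      have h3 := mem.symm.trans e2
      rw [eq_comm, mul_inv_eq_one] at h3
      exact h3.symm
    exact ⟨h1, h2⟩
  have key : ∀ w' ∈ A, ∀ a ∈ A,
      πW ((w' * φ w')⁻¹ * (a * φ a)) = πW ((w' * φ w')⁻¹ * a) ∧
      πV ((w' * φ w')⁻¹ * (a * φ a)) = πV ((w' * φ w')⁻¹ * a) * φ a ∧
      πW ((w' * φ w') * πW ((w' * φ w')⁻¹ * a)) = a ∧
      πV ((w' * φ w') * πW ((w' * φ w')⁻¹ * a)) = (πV ((w' * φ w')⁻¹ * a))⁻¹ := by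
    intro w' hw' a ha
    set x := w' * φ w' with hx
    obtain ⟨hu, hv, hg⟩ := hproj (x⁻¹ * a)
    have eq1 : x⁻¹ * (a * φ a) = πW (x⁻¹ * a) * (πV (x⁻¹ * a) * φ a) := by
      rw [← mul_assoc, ← mul_assoc]
      exact congrArg (fun z => z * φ a) hg
    have d1 := uniq _ _ _ hu (V.mul_mem hv (hφ a ha)) eq1
    have hπW : πW (x⁻¹ * a) = (x⁻¹ * a) * (πV (x⁻¹ * a))⁻¹ := by
      rw [eq_mul_inv_iff_mul_eq]; exact hg.symm
    have eq2 : x * πW (x⁻¹ * a) = a * (πV (x⁻¹ * a))⁻¹ := by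
      rw [hπW]; group
    have d2 := uniq _ _ _ (hA ha) (V.inv_mem hv) eq2
    exact ⟨d1.1, d1.2, d2.1, d2.2⟩
  constructor
  · intro H x hx w hw
    obtain ⟨w', hw', rfl⟩ := hx
    obtain ⟨a, ha, rfl⟩ := hw
    obtain ⟨k1, k2, k3, k4⟩ := key w' hw' a ha
    have hle := H a ha w' hw'
    rw [k1, k2] at hle
    rw [k3, k4, inv_inv]
    exact hle
  · intro H a ha w' hw'
    obtain ⟨k1, k2, k3, k4⟩ := key w' hw' a ha
    have hx : (w' * φ w') ∈ {g : G | ∃ w ∈ A, g = w * φ w} := ⟨w', hw', rfl⟩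
    have hw : πW ((w' * φ w')⁻¹ * a) ∈ (fun η => πW ((w' * φ w')⁻¹ * η)) '' A :=
      ⟨a, ha, rfl⟩
    have hle := H _ hx _ hw
    rw [k3, k4, inv_inv] at hle
    rw [k1, k2]
    exact hle
end

section
/- Every intrinsically linear map L : W → V between complementary homogeneous subgroups of a homogeneous group G is homogeneous: L(δ_t(w)) = δ_t(L(w)) for every w ∈ W and t > 0. -/
open HomogeneousGroup

/-- `L : W → V` is intrinsically linear if its intrinsic graph
`{w · L(w) : w ∈ W}` is a homogeneous subgroup of `G`. -/
def HomogeneousGroup.IsIntrinsicallyLinear {G : Type*} [HomogeneousGroup G]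
    (W V : Subgroup G) (L : G → G) : Prop :=
  (∀ w ∈ W, L w ∈ V) ∧ ∃ H : Subgroup G, IsHomSubgroup H ∧
    (H : Set G) = {g : G | ∃ w ∈ (W : Set G), g = w * L w}

/-- Every intrinsically linear map `L : W → V` between complementary
homogeneous subgroups is homogeneous: `L(δ_t w) = δ_t(L w)` for all `w ∈ W`, `t > 0`. -/
theorem statement7 {G : Type*} [HomogeneousGroup G]
    (W V : Subgroup G) (h : AreComplementary W V)
    (L : G → G) (hL : IsIntrinsicallyLinear W V L) :
    ∀ w ∈ W, ∀ t : ℝ, 0 < t → L (dil t w) = dil t (L w) := by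
  intro w hw t ht
  obtain ⟨hLV, H, ⟨_, hHdil⟩, hHset⟩ := hL
  obtain ⟨hWhom, hVhom, hWV, _⟩ := h
  -- w * L w ∈ H
  have hmem : w * L w ∈ H := by
    rw [← SetLike.mem_coe, hHset]; exact ⟨w, hw, rfl⟩
  have hmem2 : dil t (w * L w) ∈ H := hHdil t ht _ hmem
  rw [← SetLike.mem_coe, hHset] at hmem2
  obtain ⟨w', hw', heq⟩ := hmem2
  rw [dil_mul ht] at heq
  -- dil t w ∈ W, dil t (L w) ∈ V, L w' ∈ V, w' ∈ W
  have h1 : dil t w ∈ W := hWhom.2 t ht w hw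
  have h2 : dil t (L w) ∈ V := hVhom.2 t ht _ (hLV w hw)
  have h3 : L w' ∈ V := hLV w' hw'
  -- uniqueness: w'⁻¹ * dil t w = L w' * (dil t (L w))⁻¹ ∈ W ∩ V
  have key : w'⁻¹ * dil t w = L w' * (dil t (L w))⁻¹ := by
    have := congrArg (fun g => w'⁻¹ * g * (dil t (L w))⁻¹) heq
    simpa [mul_assoc] using this
  have hinW : w'⁻¹ * dil t w ∈ W := W.mul_mem (W.inv_mem hw') h1
  have hinV : w'⁻¹ * dil t w ∈ V := by
    rw [key]; exact V.mul_mem h3 (V.inv_mem h2)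
  have hbot : w'⁻¹ * dil t w ∈ (⊥ : Subgroup G) := by
    rw [← hWV]; exact ⟨hinW, hinV⟩
  rw [Subgroup.mem_bot] at hbot
  have hww : dil t w = w' := by
    have := mul_eq_one_iff_inv_eq.mp hbot
    rw [← this]; simp
  have : L w' = dil t (L w) := by
    have h4 : L w' * (dil t (L w))⁻¹ = 1 := by rw [← key, hbot]
    exact mul_inv_eq_one.mp h4
  rw [hww, this]
end

section
/- Let (W,V) be complementary homogeneous subgroups of a homogeneous group G and let L : W → V be intrinsically linear. Then (graph(L), V) is a couple of complementary subgroups of G, i.e. graph(L) ∩ V = {0} and G = graph(L)·V. -/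
open HomogeneousGroup

/-- If `L : W → V` is intrinsically linear, then `(graph(L), V)` is a
couple of complementary subgroups of `G`: `graph(L) ∩ V = {1}` and `G = graph(L) · V`. -/
theorem statement8 {G : Type*} [HomogeneousGroup G]
    (W V : Subgroup G) (h : AreComplementary W V)
    (L : G → G) (hL : IsIntrinsicallyLinear W V L) :
    ∀ H : Subgroup G, (H : Set G) = {g : G | ∃ w ∈ (W : Set G), g = w * L w} →
      AreComplementary H V := by
  intro H hH
  obtain ⟨hLV, H', hH'hom, hH'⟩ := hL
  obtain ⟨hWhom, hVhom, hWV, hfact⟩ := h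
  have hHH' : H = H' := SetLike.coe_injective (hH.trans hH'.symm)
  -- L 1 = 1
  have h1 : (1 : G) ∈ H := H.one_mem
  have hL1 : L 1 = 1 := by
    rw [← SetLike.mem_coe, hH] at h1
    obtain ⟨w, hw, hw1⟩ := h1
    have hwV : w ∈ V := by
      have : w = (L w)⁻¹ := eq_inv_of_mul_eq_one_left hw1.symm
      rw [this]; exact V.inv_mem (hLV w hw)
    have : w ∈ W ⊓ V := ⟨hw, hwV⟩
    rw [hWV] at this
    have hw1' : w = 1 := this
    rw [hw1'] at hw1
    simpa using hw1.symm
  refine ⟨hHH' ▸ hH'hom, hVhom, ?_, ?_⟩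
  · rw [eq_bot_iff]
    intro g hg
    obtain ⟨hgH, hgV⟩ := Subgroup.mem_inf.mp hg
    rw [← SetLike.mem_coe, hH] at hgH
    obtain ⟨w, hw, hgw⟩ := hgH
    have hwV : w ∈ V := by
      have : w = g * (L w)⁻¹ := by rw [hgw]; group
      rw [this]; exact V.mul_mem hgV (V.inv_mem (hLV w hw))
    have : w ∈ W ⊓ V := ⟨hw, hwV⟩
    rw [hWV] at this
    have hw1 : w = 1 := this
    rw [hw1, hL1] at hgw
    simp [hgw, Subgroup.mem_bot]
  · intro x
    obtain ⟨w, hw, v, hv, hx⟩ := hfact x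
    refine ⟨w * L w, ?_, (L w)⁻¹ * v, V.mul_mem (V.inv_mem (hLV w hw)) hv, ?_⟩
    · rw [← SetLike.mem_coe, hH]; exact ⟨w, hw, rfl⟩
    · rw [hx]; group
end

section
/- Let (H,V) be a couple of complementary homogeneous subgroups of a homogeneous group G, where (W,V) is also a couple of complementary subgroups. Then there exists a unique intrinsically linear function L : W → V such that H = graph(L) = {w·L(w) : w ∈ W}. -/
open HomogeneousGroup

/-- If `(H,V)` and `(W,V)` are couples of complementary homogeneous
subgroups, then there is a unique intrinsically linear `L : W → V` with
`H = graph(L) = {w · L(w) : w ∈ W}`. -/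
theorem statement9 {G : Type*} [HomogeneousGroup G]
    (W V H : Subgroup G) (hWV : AreComplementary W V) (hHV : AreComplementary H V) :
    ∃ L : G → G, IsIntrinsicallyLinear W V L ∧
      (H : Set G) = {g : G | ∃ w ∈ (W : Set G), g = w * L w} ∧
      ∀ L' : G → G, IsIntrinsicallyLinear W V L' →
        (H : Set G) = {g : G | ∃ w ∈ (W : Set G), g = w * L' w} →
        ∀ w ∈ W, L' w = L w := by
  classical
  obtain ⟨hHhom, hVhom, hHVbot, hHVdec⟩ := hHV
  obtain ⟨hWhom, _, hWVbot, hWVdec⟩ := hWV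
  choose hp hpH vp vpV hdec using hHVdec
  -- uniqueness of H-V decomposition
  have uniq : ∀ h ∈ H, ∀ v ∈ V, ∀ h' ∈ H, ∀ v' ∈ V,
      h * v = h' * v' → h = h' ∧ v = v' := by
    intro h hh v hv h' hh' v' hv' heq
    have hmem : h'⁻¹ * h ∈ H ⊓ V := by
      constructor
      · exact H.mul_mem (H.inv_mem hh') hh
      · have key : h'⁻¹ * h = v' * v⁻¹ := by
          calc h'⁻¹ * h = h'⁻¹ * (h * v) * v⁻¹ := by group
            _ = h'⁻¹ * (h' * v') * v⁻¹ := by rw [heq]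
            _ = v' * v⁻¹ := by group
        rw [key]
        exact V.mul_mem hv' (V.inv_mem hv)
    rw [hHVbot] at hmem
    have h1 : h'⁻¹ * h = 1 := hmem
    have hhe : h = h' := by
      have := mul_eq_one_iff_inv_eq.mp h1
      simpa [inv_inv] using this.symm
    refine ⟨hhe, ?_⟩
    subst hhe
    exact mul_left_cancel heq
  set L : G → G := fun g => (vp g)⁻¹ with hL
  have hLV : ∀ g : G, L g ∈ V := fun g => V.inv_mem (vpV g)
  have hgraph : (H : Set G) = {g : G | ∃ w ∈ (W : Set G), g = w * L w} := by
    ext g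
    constructor
    · intro hg
      obtain ⟨w, hw, v, hv, rfl⟩ := hWVdec g
      refine ⟨w, hw, ?_⟩
      have hw2 : (w : G) * v * v⁻¹ * v = w * v := by group
      have := uniq (hp w) (hpH w) (vp w) (vpV w) (w * v) hg v⁻¹ (V.inv_mem hv)
        (by rw [← hdec w]; group)
      have hvpw : vp w = v⁻¹ := this.2
      simp [hL, hvpw]
    · rintro ⟨w, hw, rfl⟩
      have : w * L w = hp w := by
        simp only [hL]
        rw [eq_comm, eq_mul_inv_iff_mul_eq]
        exact (hdec w).symm
      rw [this]
      exact hpH w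
  refine ⟨L, ⟨fun w _ => hLV w, H, hHhom, hgraph⟩, hgraph, ?_⟩
  intro L' hL' hG' w hw
  have h1 : w * L' w ∈ H := by rw [SetLike.mem_coe.symm, hG']; exact ⟨w, hw, rfl⟩
  have h2 : w * L w ∈ H := by rw [SetLike.mem_coe.symm, hgraph]; exact ⟨w, hw, rfl⟩
  have := uniq (w * L w) h2 1 V.one_mem (w * L' w) h1 1 V.one_mem ?_
  · exact (mul_left_cancel this.1).symm
  · have : L w = L' w := by
      have hmem : (L w)⁻¹ * L' w ∈ H ⊓ V := by
        constructor
        · have : (L w)⁻¹ * L' w = (w * L w)⁻¹ * (w * L' w) := by group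
          rw [this]
          exact H.mul_mem (H.inv_mem h2) h1
        · exact V.mul_mem (V.inv_mem (hLV w)) (hL'.1 w hw)
      rw [hHVbot] at hmem
      have h1 : (L w)⁻¹ * L' w = 1 := hmem
      have := mul_eq_one_iff_inv_eq.mp h1
      simpa using this
    rw [this]
end

section
/- Let M ∈ ℝ^{q×(q−p)} be a block matrix of the form having top block [∇; I_{n₁−p}] with ∇ ∈ ℝ^{p×(n₁−p)}, followed below by blocks forming a lower block-triangular structure with identity diagonal blocks I_{n₂},…,I_{n_ι} and zero blocks above them (as in equation (7.4) of the paper). If S is a (q−p)×(q−p) submatrix of M obtained by deleting p rows and det(S) ≠ 0, then all p deleted rows have indices ≤ n₁. Consequently, the Euclidean Jacobian √(det(MᵀM)) of M equals the Jacobian of the n₁×(n₁−p) matrix [∇; I_{n₁−p}]. -/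
open Matrix

/-- Let `M` be a `q × (q−p)` real matrix with the block structure of
equation (7.4) of the paper: rows are indexed by `(Fin p ⊕ Fin c) ⊕ Fin m` (the first
`p` rows carry `∇`, the next `c = n₁ − p` rows the identity `I_c`, and the remaining
`m` rows are distributed in layers `ℓ i ≥ 1`), columns by `Fin c ⊕ Fin m`; rows of
layer `s` have arbitrary entries in columns of lower layers, identity entries in their
own layer and zeros in columns of higher layers, while the first `p` rows vanish
outside the layer-0 columns. Then every `(q−p) × (q−p)` submatrix `S` obtained by
deleting `p` rows with `det S ≠ 0` keeps all the rows of index `≥ n₁ = p + c`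
(i.e. all deleted rows have indices ≤ n₁), and the Euclidean Jacobian
`√(det (Mᵀ M))` of `M` equals the Jacobian of the top `n₁ × (n₁ − p)` block `[∇; I_c]`. -/
theorem statement16 (p c m : ℕ)
    (M : Matrix ((Fin p ⊕ Fin c) ⊕ Fin m) (Fin c ⊕ Fin m) ℝ)
    (ℓ : Fin m → ℕ) (hℓ : ∀ i, 1 ≤ ℓ i) (hℓmono : Monotone ℓ)
    -- the `∇`-rows vanish outside the layer-0 columns
    (htop : ∀ (i : Fin p) (j : Fin m), M (Sum.inl (Sum.inl i)) (Sum.inr j) = 0)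
    -- identity rows of the first layer
    (hid1 : ∀ i j : Fin c, M (Sum.inl (Sum.inr i)) (Sum.inl j) = if i = j then 1 else 0)
    (hid1' : ∀ (i : Fin c) (j : Fin m), M (Sum.inl (Sum.inr i)) (Sum.inr j) = 0)
    -- lower rows: identity in their own layer, zero in higher layers
    (hlow : ∀ i j : Fin m, ℓ i ≤ ℓ j →
      M (Sum.inr i) (Sum.inr j) = if i = j then 1 else 0) :
    (∀ ρ : Fin c ⊕ Fin m → (Fin p ⊕ Fin c) ⊕ Fin m, Function.Injective ρ →
        (M.submatrix ρ id).det ≠ 0 → ∀ i : Fin m, Sum.inr i ∈ Set.range ρ) ∧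
      Real.sqrt (Mᵀ * M).det =
        Real.sqrt ((M.submatrix Sum.inl Sum.inl)ᵀ * M.submatrix Sum.inl Sum.inl).det := by
  constructor
  · -- Part 1
    intro ρ hρ hdet i0
    by_contra hi0
    apply hdet
    rw [Matrix.det_apply]
    refine Finset.sum_eq_zero fun σ _ => ?_
    have hzero : ∃ j, M (ρ (σ j)) (id j) = 0 := by
      by_contra hne
      push_neg at hne
      have hexists : ∀ j : Fin m, ∃ i : Fin m, ρ (σ (Sum.inr j)) = Sum.inr i := by
        intro j
        rcases hc : ρ (σ (Sum.inr j)) with r | i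
        · exfalso
          apply hne (Sum.inr j)
          show M (ρ (σ (Sum.inr j))) (Sum.inr j) = 0
          rw [hc]
          rcases r with r | r
          · exact htop r j
          · exact hid1' r j
        · exact ⟨i, rfl⟩
      choose f hf using hexists
      have hstep : ∀ j : Fin m, f j = j ∨ ℓ j < ℓ (f j) := by
        intro j
        by_contra hcon
        push_neg at hcon
        obtain ⟨hne1, hle⟩ := hcon
        apply hne (Sum.inr j)
        show M (ρ (σ (Sum.inr j))) (Sum.inr j) = 0
        rw [hf j, hlow (f j) j hle, if_neg hne1]
      set T' : Finset (Fin m) := Finset.univ.filter (fun i => ℓ i0 < ℓ i) with hT'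
      have hmaps : ∀ j ∈ insert i0 T', f j ∈ T' := by
        intro j hj
        simp only [hT', Finset.mem_insert, Finset.mem_filter, Finset.mem_univ,
          true_and] at hj ⊢
        rcases hj with rfl | hj
        · have hne1 : f j ≠ j := fun h => hi0 ⟨σ (Sum.inr j), by rw [hf j, h]⟩
          rcases hstep j with h | h
          · exact absurd h hne1
          · exact h
        · rcases hstep j with h | h
          · rw [h]; exact hj
          · exact lt_trans hj h
      have hfinj : Function.Injective f := by
        intro a b hab
        have : ρ (σ (Sum.inr a)) = ρ (σ (Sum.inr b)) := by rw [hf a, hf b, hab]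
        have := hρ this
        have := σ.injective this
        exact Sum.inr_injective this
      have hcard := Finset.card_le_card_of_injOn f hmaps (fun a _ b _ h => hfinj h)
      rw [Finset.card_insert_of_notMem (by simp [hT'])] at hcard
      omega
    obtain ⟨j, hj⟩ := hzero
    rw [Finset.prod_eq_zero (Finset.mem_univ j)
      (by simpa [Matrix.submatrix_apply] using hj), smul_zero]
  · -- Part 2
    have hZ : M.toBlocks₁₂ = 0 := by
      ext i j
      cases i with
      | inl r => exact htop r j
      | inr r => exact hid1' r j
    set L := M.toBlocks₂₂ with hLdef
    have hLtri : ∀ i j : Fin m, i < j → L i j = 0 := by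
      intro i j hij
      have h := hlow i j (hℓmono hij.le)
      show M (Sum.inr i) (Sum.inr j) = 0
      rw [h, if_neg hij.ne]
    have hLdiag : ∀ i, L i i = 1 := by
      intro i
      show M (Sum.inr i) (Sum.inr i) = 1
      rw [hlow i i le_rfl, if_pos rfl]
    have hdetL : L.det = 1 := by
      have htri : Lᵀ.BlockTriangular id := fun i j h => hLtri j i h
      rw [← Matrix.det_transpose, Matrix.det_of_upperTriangular htri]
      simp [Matrix.transpose_apply, hLdiag]
    have hLunit : IsUnit L.det := by rw [hdetL]; exact isUnit_one
    have hLL : L * L⁻¹ = 1 := Matrix.mul_nonsing_inv L hLunit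
    set A := M.toBlocks₁₁ with hAdef
    set B := M.toBlocks₂₁ with hBdef
    set U : Matrix (Fin c ⊕ Fin m) (Fin c ⊕ Fin m) ℝ :=
      Matrix.fromBlocks 1 0 (-(L⁻¹ * B)) L⁻¹ with hU
    have hMU : M * U = Matrix.fromBlocks A 0 0 1 := by
      conv_lhs => rw [← Matrix.fromBlocks_toBlocks M]
      rw [hU, hZ, ← hLdef, ← hAdef, ← hBdef, Matrix.fromBlocks_multiply]
      simp [hLL, Matrix.mul_nonsing_inv_cancel_left _ _ hLunit]
    have hNtN : (M * U)ᵀ * (M * U) = Matrix.fromBlocks (Aᵀ * A) 0 0 1 := by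
      rw [hMU, Matrix.fromBlocks_transpose, Matrix.fromBlocks_multiply]
      simp
    have hdetU : U.det = 1 := by
      rw [hU, Matrix.det_fromBlocks_zero₁₂, Matrix.det_one, one_mul,
        Matrix.det_nonsing_inv, hdetL, Ring.inverse_one]
    have h2 : (M * U)ᵀ * (M * U) = Uᵀ * (Mᵀ * M) * U := by
      simp [Matrix.transpose_mul, Matrix.mul_assoc]
    have key : (Mᵀ * M).det = (Aᵀ * A).det := by
      have h1 : ((M * U)ᵀ * (M * U)).det = (Aᵀ * A).det := by
        rw [hNtN, Matrix.det_fromBlocks_zero₂₁, Matrix.det_one, mul_one]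
      rw [← h1, h2, Matrix.det_mul, Matrix.det_mul, Matrix.det_transpose, hdetU,
        one_mul, mul_one]
    have hA : M.submatrix Sum.inl Sum.inl = A := rfl
    rw [key, hA]
end

section
/- Let G be a stratified group identified with ℝ^q via a graded orthonormal basis, M a stratified group of topological dimension p, Ω ⊂ G open, f ∈ C¹_h(Ω,M), and x ∈ Ω. Fix an orthonormal basis (b₁,…,b_p) of M and let R^i_H f(x) ∈ G represent the linear functional b_i* ∘ Df(x) via the scalar product, and R^i_V f(x) ∈ V represent b_i* ∘ Df(x)|_V for a p-dimensional homogeneous subgroup V. If U = ker Df(x) is complementary to V, 𝐕 = v₁∧⋯∧v_p for an orthonormal basis of V, and 𝐔 is a unit orienting (q−p)-vector of U, then |𝐕 ∧ 𝐔| = |R¹_V f(x) ∧ ⋯ ∧ R^p_V f(x)| / |R¹_H f(x) ∧ ⋯ ∧ R^p_H f(x)| = J_V f(x) / J_H f(x). -/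
open scoped RealInnerProductSpace

noncomputable section

/-- The data of a homogeneous group structure on a graded vector space `G`, identified
with its Lie algebra via `exp`: group product (given by the BCH formula), inverse,
dilations and a homogeneous norm. The identity element is `0`. -/
structure GroupData (G : Type*) [NormedAddCommGroup G] [InnerProductSpace ℝ G] where
  mul : G → G → G
  inv : G → G
  mul_assoc' : ∀ x y z, mul (mul x y) z = mul x (mul y z)
  zero_mul' : ∀ x, mul 0 x = x
  mul_zero' : ∀ x, mul x 0 = x
  inv_mul' : ∀ x, mul (inv x) x = 0
  dil : ℝ → G → G
  dil_mul : ∀ t : ℝ, 0 < t → ∀ x y, dil t (mul x y) = mul (dil t x) (dil t y)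
  hnorm : G → ℝ
  hnorm_zero : hnorm 0 = 0
  hnorm_pos : ∀ x, x ≠ 0 → 0 < hnorm x
  hnorm_dil : ∀ t : ℝ, 0 < t → ∀ x, hnorm (dil t x) = t * hnorm x

namespace GroupData

variable {G : Type*} [NormedAddCommGroup G] [InnerProductSpace ℝ G]

/-- A homogeneous subgroup of `G`: a linear subspace which is a subgroup closed
under dilations. -/
def IsHomSubgroup (D : GroupData G) (S : Submodule ℝ G) : Prop :=
  (∀ x ∈ S, ∀ y ∈ S, D.mul x y ∈ S) ∧ (∀ x ∈ S, D.inv x ∈ S) ∧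
    ∀ t : ℝ, 0 < t → ∀ x ∈ S, D.dil t x ∈ S

/-- `(W,V)` is a couple of complementary homogeneous subgroups. -/
def AreComplementary (D : GroupData G) (W V : Submodule ℝ G) : Prop :=
  D.IsHomSubgroup W ∧ D.IsHomSubgroup V ∧ W ⊓ V = ⊥ ∧
    ∀ x : G, ∃ w ∈ W, ∃ v ∈ V, x = D.mul w v

/-- The group projections of the factorization `x = π_W(x) · π_V(x)`. -/
def AreProjections (D : GroupData G) (W V : Submodule ℝ G) (πW πV : G → G) : Prop :=
  ∀ x : G, πW x ∈ W ∧ πV x ∈ V ∧ x = D.mul (πW x) (πV x)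

end GroupData

/-- The norm `|f 0 ∧ ⋯ ∧ f (m-1)|` of the wedge product of a family of vectors,
computed as the square root of the Gram determinant. -/
def gramNorm {G : Type*} [NormedAddCommGroup G] [InnerProductSpace ℝ G]
    {m : ℕ} (f : Fin m → G) : ℝ :=
  Real.sqrt (Matrix.det (Matrix.of fun i j : Fin m => ⟪f i, f j⟫))

/-- `f` is an orthonormal basis (as an indexed family) of the subspace `S`. -/
def IsONBasisOf {G : Type*} [NormedAddCommGroup G] [InnerProductSpace ℝ G]
    {m : ℕ} (f : Fin m → G) (S : Submodule ℝ G) : Prop :=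
  (∀ i j, ⟪f i, f j⟫ = if i = j then (1 : ℝ) else 0) ∧
    Submodule.span ℝ (Set.range f) = S

open GroupData

lemma onbRep {G : Type*} [NormedAddCommGroup G] [InnerProductSpace ℝ G]
    {m : ℕ} {f : Fin m → G} {S : Submodule ℝ G}
    (hON : ∀ i j, ⟪f i, f j⟫ = if i = j then (1:ℝ) else 0)
    (hspan : Submodule.span ℝ (Set.range f) = S)
    {x : G} (hx : x ∈ S) : ∑ k, ⟪x, f k⟫ • f k = x := by
  rw [← hspan] at hx
  obtain ⟨c, rfl⟩ := (Submodule.mem_span_range_iff_exists_fun ℝ).mp hx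
  have hcoef : ∀ l, ⟪∑ i, c i • f i, f l⟫ = c l := by
    intro l
    rw [sum_inner]
    simp [real_inner_smul_left, hON]
  simp only [hcoef]


/-- Let `F = Df(x) : G → M` be the (surjective) Pansu differential,
`(b_i)` an orthonormal basis of `M`, `R^i_H f(x)` and `R^i_V f(x)` the vectors
representing `b_i* ∘ F` on `G` and on `V`. If `U = ker F` is complementary to `V`,
`𝐕 = v₁ ∧ ⋯ ∧ v_p` for an orthonormal basis of `V` and `𝐔` is a unit orienting
`(q−p)`-vector of `U`, then
`|𝐕 ∧ 𝐔| = |R¹_V ∧ ⋯ ∧ R^p_V| / |R¹_H ∧ ⋯ ∧ R^p_H| = J_V f(x) / J_H f(x)`. -/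
theorem statement19 {G M : Type*}
    [NormedAddCommGroup G] [InnerProductSpace ℝ G] [FiniteDimensional ℝ G]
    [NormedAddCommGroup M] [InnerProductSpace ℝ M] [FiniteDimensional ℝ M]
    (q p : ℕ) (hq : Module.finrank ℝ G = q) (hM : Module.finrank ℝ M = p) (hpq : p ≤ q)
    (F : G →ₗ[ℝ] M) (hFsurj : Function.Surjective F)
    (b : OrthonormalBasis (Fin p) ℝ M)
    -- the representing vectors of the rows `b_i* ∘ F` of the differential
    (RH : Fin p → G) (hRH : ∀ i, ∀ y : G, ⟪RH i, y⟫ = ⟪b i, F y⟫)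
    (V : Submodule ℝ G) (hV : Module.finrank ℝ V = p)
    (RV : Fin p → G) (hRVmem : ∀ i, RV i ∈ V)
    (hRV : ∀ i, ∀ v ∈ V, ⟪RV i, v⟫ = ⟪b i, F v⟫)
    -- `U = ker F` is complementary to `V`
    (hcompl : IsCompl (LinearMap.ker F) V)
    (vb : Fin p → G) (hvb : IsONBasisOf vb V)
    (ub : Fin (q - p) → G) (hub : IsONBasisOf ub (LinearMap.ker F)) :
    gramNorm (Fin.append vb ub) = gramNorm RV / gramNorm RH := by
  classical
  unfold gramNorm
  obtain ⟨hvbON, hvbspan⟩ := hvb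
  obtain ⟨hubON, hubspan⟩ := hub
  have hvbmem : ∀ i, vb i ∈ V := fun i => hvbspan ▸ Submodule.subset_span ⟨i, rfl⟩
  have hubmem : ∀ j, ub j ∈ LinearMap.ker F :=
    fun j => hubspan ▸ Submodule.subset_span ⟨j, rfl⟩
  have hFub : ∀ j, F (ub j) = 0 := fun j => (LinearMap.mem_ker).mp (hubmem j)
  -- dimension of the kernel and of W
  have hker : Module.finrank ℝ (LinearMap.ker F) = q - p := by
    have h1 := LinearMap.finrank_range_add_finrank_ker F
    rw [LinearMap.range_eq_top.mpr hFsurj, finrank_top] at h1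
    omega
  set W : Submodule ℝ G := (LinearMap.ker F)ᗮ with hWdef
  have hWfin : Module.finrank ℝ W = p := by
    have h2 := Submodule.finrank_add_finrank_orthogonal (K := LinearMap.ker F)
    rw [← hWdef] at h2
    omega
  -- orthonormal basis of W
  let w0 : OrthonormalBasis (Fin p) ℝ W :=
    (stdOrthonormalBasis ℝ W).reindex (finCongr hWfin)
  let w : Fin p → G := fun k => (w0 k : G)
  have hwmem : ∀ k, w k ∈ W := fun k => (w0 k).2
  have hwON : ∀ k l, ⟪w k, w l⟫ = if k = l then (1:ℝ) else 0 := by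
    intro k l
    have h := w0.orthonormal
    rw [orthonormal_iff_ite] at h
    have := h k l
    rwa [Submodule.coe_inner] at this
  have hwspan : Submodule.span ℝ (Set.range w) = W := by
    have : Set.range w = (W.subtype) '' Set.range w0 := by
      ext x; simp [w, Set.range_comp]
    rw [this, ← Submodule.map_span, ← w0.coe_toBasis, Module.Basis.span_eq]
    simp [Submodule.map_top, Submodule.range_subtype]
  -- orthogonality facts
  have hw_ker : ∀ (k) (u), u ∈ LinearMap.ker F → ⟪u, w k⟫ = 0 := by
    intro k u hu
    exact (Submodule.mem_orthogonal _ _).mp (hwmem k) u hu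
  have hRHmem : ∀ i, RH i ∈ W := by
    intro i
    rw [hWdef, Submodule.mem_orthogonal]
    intro u hu
    rw [real_inner_comm, hRH i u, LinearMap.mem_ker.mp hu, inner_zero_right]
  -- the combined orthonormal basis of G
  let s : Fin p ⊕ Fin (q - p) → G := Sum.elim w ub
  have hsON : Orthonormal ℝ s := by
    rw [orthonormal_iff_ite]
    rintro (k | j) (l | j')
    · simpa [s] using hwON k l
    · simpa [s] using real_inner_comm (w k) (ub j') ▸ hw_ker k (ub j') (hubmem j')
    · simpa [s] using hw_ker l (ub j) (hubmem j)
    · simpa [s] using hubON j j'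
  have hsspan : Submodule.span ℝ (Set.range s) = ⊤ := by
    rw [show Set.range s = Set.range w ∪ Set.range ub from Set.Sum.elim_range w ub,
      Submodule.span_union, hwspan, hubspan]
    rw [sup_comm]
    exact Submodule.isCompl_orthogonal_of_hasOrthogonalProjection.sup_eq_top
  let sb : Module.Basis (Fin p ⊕ Fin (q - p)) ℝ G := Module.Basis.mk hsON.linearIndependent (by rw [hsspan])
  have hsb : ⇑sb = s := Module.Basis.coe_mk _ _
  let e : OrthonormalBasis (Fin p ⊕ Fin (q - p)) ℝ G :=
    sb.toOrthonormalBasis (by rwa [hsb])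
  have he : ∀ c, e c = s c := by
    intro c
    rw [show e c = sb c from congrFun (Module.Basis.coe_toOrthonormalBasis sb _) c, hsb]
  have hpars : ∀ x y : G, ⟪x, y⟫ = ∑ c, ⟪x, s c⟫ * ⟪y, s c⟫ := by
    intro x y
    rw [← e.sum_inner_mul_inner x y]
    refine Finset.sum_congr rfl fun c _ => ?_
    rw [he, real_inner_comm (s c) y]
  -- the matrices
  set A : Matrix (Fin p) (Fin (q-p)) ℝ := Matrix.of fun i j => ⟪vb i, ub j⟫ with hA
  set B : Matrix (Fin p) (Fin p) ℝ := Matrix.of fun i k => ⟪vb i, w k⟫ with hB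
  set C : Matrix (Fin p) (Fin p) ℝ := Matrix.of fun i k => ⟪RH i, w k⟫ with hC
  -- Step 1 : the Gram norm of the appended family is |det B|
  -- coordinate matrix of `Sum.elim vb ub` in the orthonormal basis `s`
  let N : Matrix (Fin p ⊕ Fin (q-p)) (Fin p ⊕ Fin (q-p)) ℝ := Matrix.fromBlocks B A 0 1
  have hN : ∀ a c, N a c = ⟪Sum.elim vb ub a, s c⟫ := by
    rintro (i | j) (k | j')
    · simp [N, hB, s]
    · simp [N, hA, s]
    · simpa [N, s] using (hw_ker k (ub j) (hubmem j)).symm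
    · simpa [N, s, Matrix.one_apply] using (hubON j j').symm
  have hGram' : (Matrix.of fun a c : Fin p ⊕ Fin (q-p) =>
      ⟪Sum.elim vb ub a, Sum.elim vb ub c⟫) = N * N.transpose := by
    ext a c
    rw [Matrix.of_apply, Matrix.mul_apply, hpars]
    exact Finset.sum_congr rfl fun d _ => by rw [Matrix.transpose_apply, hN, hN]
  have hdetN : N.det = B.det := by
    rw [show N = Matrix.fromBlocks B A 0 1 from rfl, Matrix.det_fromBlocks_zero₂₁, Matrix.det_one,
      mul_one]
  have happend : ∀ x : Fin (p + (q-p)), Fin.append vb ub x = Sum.elim vb ub (finSumFinEquiv.symm x) := by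
    intro x
    obtain ⟨y, rfl⟩ := finSumFinEquiv.surjective x
    rcases y with k | j <;> simp
  have step1 : Real.sqrt (Matrix.det (Matrix.of fun i j : Fin (p + (q-p)) =>
      ⟪Fin.append vb ub i, Fin.append vb ub j⟫)) = |B.det| := by
    have h1 : (Matrix.of fun i j : Fin (p + (q-p)) => ⟪Fin.append vb ub i, Fin.append vb ub j⟫)
        = (Matrix.of fun a c : Fin p ⊕ Fin (q-p) =>
            ⟪Sum.elim vb ub a, Sum.elim vb ub c⟫).submatrix finSumFinEquiv.symm finSumFinEquiv.symm := by
      ext i j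
      simp [happend]
    rw [h1, Matrix.det_submatrix_equiv_self, hGram', Matrix.det_mul, Matrix.det_transpose,
      hdetN, ← sq, Real.sqrt_sq_eq_abs]
  -- Step 2 : the Gram norm of RH is |det C|
  have hRHrep : ∀ i, ∑ l, C i l • w l = RH i := by
    intro i
    have := onbRep hwON hwspan (hRHmem i)
    simpa [hC] using this
  have step2 : Real.sqrt (Matrix.det (Matrix.of fun i j : Fin p => ⟪RH i, RH j⟫)) = |C.det| := by
    have h2 : (Matrix.of fun i j : Fin p => ⟪RH i, RH j⟫) = C * C.transpose := by
      ext i j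
      rw [Matrix.of_apply, Matrix.mul_apply, hpars]
      rw [Fintype.sum_sum_type]
      have hz : ∀ j' : Fin (q - p), ⟪RH i, s (Sum.inr j')⟫ * ⟪RH j, s (Sum.inr j')⟫ = 0 := by
        intro j'
        have : ⟪RH i, ub j'⟫ = 0 := by rw [hRH, hFub, inner_zero_right]
        simp [s, this]
      rw [Finset.sum_congr rfl fun j' _ => hz j', Finset.sum_const_zero, add_zero]
      exact Finset.sum_congr rfl fun k _ => by simp [s, hC, Matrix.transpose_apply]
    rw [h2, Matrix.det_mul, Matrix.det_transpose, ← sq, Real.sqrt_sq_eq_abs]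
  -- Step 3 : the Gram norm of RV is |det C * det B|
  have hRVvb : ∀ i k, ⟪RV i, vb k⟫ = (C * B.transpose) i k := by
    intro i k
    rw [hRV i (vb k) (hvbmem k), ← hRH i (vb k), ← hRHrep i, sum_inner, Matrix.mul_apply]
    refine Finset.sum_congr rfl fun l _ => ?_
    rw [real_inner_smul_left, Matrix.transpose_apply, hB, Matrix.of_apply,
      real_inner_comm (w l) (vb k)]
  have step3 : Real.sqrt (Matrix.det (Matrix.of fun i j : Fin p => ⟪RV i, RV j⟫))
      = |C.det * B.det| := by
    have h3 : (Matrix.of fun i j : Fin p => ⟪RV i, RV j⟫) = (C * B.transpose) * (C * B.transpose).transpose := by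
      ext i j
      rw [Matrix.of_apply, ← onbRep hvbON hvbspan (hRVmem j), inner_sum, Matrix.mul_apply]
      refine Finset.sum_congr rfl fun k _ => ?_
      rw [real_inner_smul_right, Matrix.transpose_apply, hRVvb, hRVvb, mul_comm]
    rw [h3, Matrix.det_mul, Matrix.det_transpose, ← sq, Real.sqrt_sq_eq_abs, Matrix.det_mul,
      Matrix.det_transpose]
  -- Step 4 : det C ≠ 0
  have hCdet : C.det ≠ 0 := by
    intro hC0
    obtain ⟨g, hg0, hmul⟩ := (Matrix.exists_mulVec_eq_zero_iff).mpr hC0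
    set z : G := ∑ k, g k • w k with hz
    have hFz : ∀ i, ⟪b i, F z⟫ = 0 := by
      intro i
      rw [hz, map_sum]
      rw [inner_sum]
      have : ∀ k, ⟪b i, F (g k • w k)⟫ = C i k * g k := by
        intro k
        rw [map_smul, real_inner_smul_right, ← hRH i (w k), mul_comm]
        rfl
      rw [Finset.sum_congr rfl fun k _ => this k]
      exact congrFun hmul i
    have hFz0 : F z = 0 := by
      have := b.sum_repr' (F z)
      rw [Finset.sum_congr rfl fun i _ => by rw [hFz i, zero_smul]] at this
      simpa using this.symm
    have hzW : z ∈ W := Submodule.sum_mem _ fun k _ => Submodule.smul_mem _ _ (hwmem k)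
    have hz0 : z = 0 := by
      have := hw_ker
      have h := (Submodule.mem_orthogonal _ _).mp hzW z (LinearMap.mem_ker.mpr hFz0)
      rwa [inner_self_eq_zero] at h
    have hgl : ∀ l, g l = 0 := by
      intro l
      have : ⟪z, w l⟫ = g l := by
        rw [hz, sum_inner]
        simp [real_inner_smul_left, hwON]
      rw [hz0, inner_zero_left] at this
      exact this.symm
    exact hg0 (funext hgl)
  -- conclusion
  rw [step1, step2, step3, abs_mul, mul_comm (|C.det|) (|B.det|), mul_div_assoc,
    div_self (abs_ne_zero.mpr hCdet), mul_one]
end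
end
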